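/- Let U ⊆ ℂ be open and let f be an injective holomorphic function on U. Then there exists a function F of two complex variables, holomorphic on U × U, such that F(u, w) = f'(u)·f'(w)/(f(u) − f(w))² − 1/(u − w)² for all u, w ∈ U with u ≠ w. (In particular, the Grunsky-type kernel f'(u)f'(w)/(f(u)−f(w))² − 1/(u−w)² extends holomorphically across the diagonal.) -/

import Mathlib

open Complex Metric Filter Set Topology intervalIntegral MeasureTheory


lemma deriv_ne_zero_of_injOn {U : Set ℂ} (hU : IsOpen U) {f : ℂ → ℂ}
    (hf : DifferentiableOn ℂ f U) (hinj : Set.InjOn f U) {z₀ : ℂ} (hz : z₀ ∈ U) :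
    deriv f z₀ ≠ 0 := by
  intro hd0
  have hA : AnalyticAt ℂ f z₀ := (hf.analyticOnNhd hU) z₀ hz
  have hUz : U ∈ 𝓝 z₀ := hU.mem_nhds hz
  have hng : AnalyticAt ℂ (fun z => f z - f z₀) z₀ := hA.sub analyticAt_const
  have hnotev : ¬ ∀ᶠ z in 𝓝 z₀, f z - f z₀ = 0 := by
    intro hev
    obtain ⟨ε, hε, hball⟩ := Metric.mem_nhds_iff.1 (inter_mem hUz hev)
    have h1 : z₀ + ((ε/2 : ℝ) : ℂ) ∈ ball z₀ ε := by
      simp only [Metric.mem_ball, dist_eq, add_sub_cancel_left, Complex.norm_real, Real.norm_eq_abs,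
        abs_of_pos (by linarith : (0:ℝ) < ε/2)]
      linarith
    have h2 := hball h1
    have h3 := hball (mem_ball_self hε)
    have heq : z₀ + ((ε/2 : ℝ) : ℂ) = z₀ := by
      apply hinj h2.1 h3.1
      have e2 : f (z₀ + ((ε/2 : ℝ) : ℂ)) - f z₀ = 0 := h2.2
      rw [sub_eq_zero] at e2; exact e2
    rw [add_eq_left, Complex.ofReal_eq_zero] at heq
    linarith
  obtain ⟨n, h, hh_an, hh0, heq⟩ :=
    hng.exists_eventuallyEq_pow_smul_nonzero_iff.2 hnotev
  simp only [smul_eq_mul] at heq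
  -- n ≥ 2
  have hn0 : n ≠ 0 := by
    rintro rfl
    have h0 := heq.self_of_nhds
    simp only [sub_self, pow_zero, one_mul] at h0
    exact hh0 h0.symm
  have hh_diff : DifferentiableAt ℂ h z₀ := hh_an.differentiableAt
  have hdg : HasDerivAt (fun z => f z - f z₀) (deriv f z₀) z₀ := by
    have : HasDerivAt f (deriv f z₀) z₀ :=
      ((hf.differentiableAt hUz).hasDerivAt)
    simpa using this.sub_const (f z₀)
  have hn1 : n ≠ 1 := by
    rintro rfl
    have h2 : HasDerivAt (fun z => (z - z₀) ^ 1 * h z) (h z₀) z₀ := by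
      have := ((hasDerivAt_id z₀).sub_const z₀).mul hh_diff.hasDerivAt
      exact (this.congr_deriv (by simp)).congr_of_eventuallyEq
        (Filter.Eventually.of_forall fun z => by simp)
    have h3 : HasDerivAt (fun z => f z - f z₀) (h z₀) z₀ :=
      h2.congr_of_eventuallyEq heq
    exact hh0 (by rw [← h3.deriv, hdg.deriv, hd0])
  have hn2 : 2 ≤ n := by omega
  -- construct n-th root r of h near z₀
  set c := h z₀ with hc
  have hc0 : c ≠ 0 := hh0
  have hncC : (n : ℂ) ≠ 0 := Nat.cast_ne_zero.2 hn0
  set r : ℂ → ℂ := fun z =>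
    Complex.exp (Complex.log (h z / c) / n) * Complex.exp (Complex.log c / n) with hr
  have hr_an : AnalyticAt ℂ r z₀ := by
    apply AnalyticAt.mul _ analyticAt_const
    apply AnalyticAt.cexp
    apply AnalyticAt.div _ analyticAt_const hncC
    exact AnalyticAt.clog (hh_an.div analyticAt_const hc0) (by
      show h z₀ / c ∈ Complex.slitPlane
      rw [show h z₀ / c = 1 from div_self hc0]; exact Complex.one_mem_slitPlane)
  have hr0 : r z₀ ≠ 0 := mul_ne_zero (Complex.exp_ne_zero _) (Complex.exp_ne_zero _)
  have hrpow : ∀ᶠ z in 𝓝 z₀, r z ^ n = h z := by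
    have hhne : ∀ᶠ z in 𝓝 z₀, h z ≠ 0 :=
      hh_an.continuousAt.eventually_ne hh0
    filter_upwards [hhne] with z hz0
    rw [hr]
    rw [mul_pow, ← Complex.exp_nat_mul, ← Complex.exp_nat_mul,
      mul_div_cancel₀ _ hncC, mul_div_cancel₀ _ hncC,
      Complex.exp_log (div_ne_zero hz0 hc0), Complex.exp_log hc0,
      div_mul_cancel₀ _ hc0]
  set ψ : ℂ → ℂ := fun z => (z - z₀) * r z with hψ
  have hψ_eq : ∀ᶠ z in 𝓝 z₀, f z - f z₀ = ψ z ^ n := by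
    filter_upwards [heq, hrpow] with z h1 h2
    rw [h1, hψ, mul_pow, h2]
  -- ψ is a local homeo: strict deriv r z₀ ≠ 0
  have hψ_an : AnalyticAt ℂ ψ z₀ := ((analyticAt_id.sub analyticAt_const)).mul hr_an
  have hψd : HasStrictDerivAt ψ (r z₀) z₀ := by
    have h1 : HasStrictDerivAt (fun z : ℂ => z - z₀) 1 z₀ :=
      (hasStrictDerivAt_id z₀).sub_const z₀
    have h2 : HasStrictDerivAt r (deriv r z₀) z₀ := by
      have := hr_an.hasStrictFDerivAt
      exact this.hasStrictDerivAt
    have := h1.mul h2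
    exact this.congr_deriv (by simp)
  have hmap : Filter.map ψ (𝓝 z₀) = 𝓝 (ψ z₀) := hψd.map_nhds_eq hr0
  have hψ0 : ψ z₀ = 0 := by simp [hψ]
  -- pick good neighborhood V
  have hUev : ∀ᶠ z in 𝓝 z₀, z ∈ U := hUz
  obtain ⟨V, hV_nhds, hV⟩ := eventually_iff_exists_mem.1 (hψ_eq.and hUev)
  have himg : ψ '' V ∈ 𝓝 (0 : ℂ) := by
    rw [← hψ0, ← hmap]
    exact Filter.image_mem_map hV_nhds
  obtain ⟨δ, hδ, hδsub⟩ := Metric.mem_nhds_iff.1 himg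
  -- the two preimage points
  set ω : ℂ := Complex.exp (2 * Real.pi * Complex.I / n) with hω
  have hωn : ω ^ n = 1 := by
    rw [hω, ← Complex.exp_nat_mul, mul_div_cancel₀ _ hncC, Complex.exp_two_pi_mul_I]
  have hω1 : ω ≠ 1 := by
    rw [hω]
    intro hcon
    rw [Complex.exp_eq_one_iff] at hcon
    obtain ⟨k, hk⟩ := hcon
    have h2πI : ((2 : ℂ) * Real.pi * Complex.I) ≠ 0 := by
      simp [Real.pi_ne_zero, Complex.I_ne_zero]
    have h1 : ((k : ℂ) * n - 1) * (2 * Real.pi * Complex.I) = 0 := by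
      have hk' : 2 * (Real.pi : ℂ) * Complex.I = (k : ℂ) * (2 * Real.pi * Complex.I) * n := by
        field_simp at hk
        linear_combination (2 * (Real.pi:ℂ) * Complex.I) * hk
      linear_combination -hk'
    have h2 : ((k * n : ℤ) : ℂ) = 1 := by
      have := (mul_eq_zero.1 h1).resolve_right h2πI
      push_cast
      linear_combination this
    have h3 : (k * n : ℤ) = 1 := by exact_mod_cast h2
    have : (n : ℤ) ∣ 1 := ⟨k, by linarith [h3]⟩
    have := Int.le_of_dvd one_pos this
    omega
  have hωabs : ‖ω‖ = 1 := by
    rw [hω]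
    rw [Complex.norm_exp]
    norm_num [Complex.div_re]
  set ε : ℂ := ((δ/2 : ℝ) : ℂ) with hε
  have hεne : ε ≠ 0 := by
    rw [hε, Complex.ofReal_ne_zero]; positivity
  have habs : ‖ε‖ = δ/2 := by
    rw [hε, Complex.norm_real, Real.norm_eq_abs, abs_of_pos (by linarith)]
  have hε_mem : ε ∈ ball (0:ℂ) δ := by
    rw [mem_ball, dist_zero_right, habs]; linarith
  have hεω_mem : ε * ω ∈ ball (0:ℂ) δ := by
    rw [mem_ball, dist_zero_right, norm_mul, hωabs, mul_one, habs]; linarith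
  obtain ⟨z₁, hz₁V, hz₁⟩ := hδsub hε_mem
  obtain ⟨z₂, hz₂V, hz₂⟩ := hδsub hεω_mem
  have hz₁U : z₁ ∈ U := (hV z₁ hz₁V).2
  have hz₂U : z₂ ∈ U := (hV z₂ hz₂V).2

  have hfz : f z₁ = f z₂ := by
    have e1 : f z₁ - f z₀ = ψ z₁ ^ n := (hV z₁ hz₁V).1
    have e2 : f z₂ - f z₀ = ψ z₂ ^ n := (hV z₂ hz₂V).1
    have : ψ z₁ ^ n = ψ z₂ ^ n := by
      rw [hz₁, hz₂, mul_pow, hωn, mul_one]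
    have h4 := e1.trans (this.trans e2.symm)
    exact sub_left_inj.mp h4
  have : z₁ = z₂ := hinj hz₁U hz₂U hfz
  rw [this, hz₂] at hz₁
  exact hω1 (mul_left_cancel₀ hεne (hz₁.trans (mul_one ε).symm))

set_option maxHeartbeats 1000000 in
lemma intdiff {G : ℂ → ℂ} {z₀ : ℂ} {r : ℝ} (hG : DifferentiableOn ℂ G (ball z₀ r))
    (φ : ℝ → ℝ) (hφ : Continuous φ) {p₀ : ℂ × ℂ} (hp₁ : p₀.1 ∈ ball z₀ r) (hp₂ : p₀.2 ∈ ball z₀ r) :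
    DifferentiableAt ℂ (fun p : ℂ × ℂ =>
      ∫ t in (0:ℝ)..1, (φ t : ℂ) * G (p.2 + (t : ℂ) * (p.1 - p.2))) p₀ := by
  have hGa : AnalyticOnNhd ℂ G (ball z₀ r) := hG.analyticOnNhd isOpen_ball
  have hG'c : ContinuousOn (deriv G) (ball z₀ r) := (hGa.deriv).continuousOn
  have hGc : ContinuousOn G (ball z₀ r) := hG.continuousOn
  set m : ℝ := max (dist p₀.1 z₀) (dist p₀.2 z₀) with hm
  have hmr : m < r := max_lt hp₁ hp₂
  set ε : ℝ := (r - m)/2 with hε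
  have hε0 : 0 < ε := by
    have : 0 ≤ m := le_max_of_le_left dist_nonneg
    simp only [hε]; linarith
  set r₁ : ℝ := m + ε with hr₁
  have hr₁r : r₁ < r := by simp only [hr₁, hε]; linarith
  have hr₁0 : 0 < r₁ := by
    have : 0 ≤ m := le_max_of_le_left dist_nonneg
    simp only [hr₁]; linarith
  -- key geometric fact
  have hseg : ∀ p ∈ ball p₀ ε, ∀ t ∈ Icc (0:ℝ) 1,
      p.2 + (t : ℂ) * (p.1 - p.2) ∈ closedBall z₀ r₁ := by
    intro p hp t ht
    have h1 : p.1 ∈ closedBall z₀ r₁ := by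
      rw [mem_closedBall]
      calc dist p.1 z₀ ≤ dist p.1 p₀.1 + dist p₀.1 z₀ := dist_triangle _ _ _
        _ ≤ dist p p₀ + m := by
            gcongr
            · rw [Prod.dist_eq]; exact le_max_left _ _
            · exact le_max_left _ _
        _ ≤ ε + m := by
            have := (mem_ball.1 hp).le
            gcongr
        _ = r₁ := by ring
    have h2 : p.2 ∈ closedBall z₀ r₁ := by
      rw [mem_closedBall]
      calc dist p.2 z₀ ≤ dist p.2 p₀.2 + dist p₀.2 z₀ := dist_triangle _ _ _
        _ ≤ dist p p₀ + m := by
            gcongr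
            · rw [Prod.dist_eq]; exact le_max_right _ _
            · exact le_max_right _ _
        _ ≤ ε + m := by
            have := (mem_ball.1 hp).le
            gcongr
        _ = r₁ := by ring
    have := (convex_closedBall z₀ r₁).add_smul_sub_mem h2 h1 ht
    simpa [Complex.real_smul] using this
  have hsub : closedBall z₀ r₁ ⊆ ball z₀ r := closedBall_subset_ball hr₁r
  -- bound on deriv G
  obtain ⟨C, hC⟩ := (isCompact_closedBall z₀ r₁).exists_bound_of_continuousOn
    (hG'c.mono hsub)
  have hC0 : 0 ≤ C := le_trans (norm_nonneg _) (hC _ (mem_closedBall_self hr₁0.le))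
  -- the linear map
  set L : ℝ → (ℂ × ℂ) →L[ℂ] ℂ := fun t =>
    (t : ℂ) • ContinuousLinearMap.fst ℂ ℂ ℂ + ((1 - t : ℝ) : ℂ) • ContinuousLinearMap.snd ℂ ℂ ℂ
    with hL
  have hL_apply : ∀ t (x : ℂ × ℂ), L t x = (t:ℂ) * x.1 + ((1-t : ℝ):ℂ) * x.2 := by
    intro t x; simp [hL]
  have hLnorm : ∀ t ∈ Icc (0:ℝ) 1, ‖L t‖ ≤ 2 := by
    intro t ht
    apply ContinuousLinearMap.opNorm_le_bound _ (by norm_num)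
    intro x
    rw [hL_apply]
    have habs_t : |t| ≤ 1 := abs_le.2 ⟨by linarith [ht.1], ht.2⟩
    have habs_1t : |1 - t| ≤ 1 := abs_le.2 ⟨by linarith [ht.2], by linarith [ht.1]⟩
    calc ‖(t:ℂ) * x.1 + ((1-t : ℝ):ℂ) * x.2‖
        ≤ ‖(t:ℂ) * x.1‖ + ‖((1-t:ℝ):ℂ) * x.2‖ := norm_add_le _ _
      _ = |t| * ‖x.1‖ + |1-t| * ‖x.2‖ := by
          rw [norm_mul, norm_mul, Complex.norm_real, Complex.norm_real, Real.norm_eq_abs, Real.norm_eq_abs]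
      _ ≤ 1 * ‖x‖ + 1 * ‖x‖ :=
          add_le_add (mul_le_mul habs_t (norm_fst_le x) (norm_nonneg _) zero_le_one)
            (mul_le_mul habs_1t (norm_snd_le x) (norm_nonneg _) zero_le_one)
      _ = 2 * ‖x‖ := by ring
  -- the derivative candidate
  set F' : (ℂ × ℂ) → ℝ → (ℂ × ℂ) →L[ℂ] ℂ := fun p t =>
    (φ t : ℂ) • (deriv G (p.2 + (t:ℂ) * (p.1 - p.2)) • L t) with hF'
  -- HasFDerivAt of integrand
  have hdiff : ∀ t ∈ Icc (0:ℝ) 1, ∀ p ∈ ball p₀ ε,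
      HasFDerivAt (fun q : ℂ × ℂ => (φ t : ℂ) * G (q.2 + (t:ℂ) * (q.1 - q.2))) (F' p t) p := by
    intro t ht p hp
    have hmem := hseg p hp t ht
    have hGd : HasDerivAt G (deriv G (p.2 + (t:ℂ) * (p.1 - p.2)))
        (p.2 + (t:ℂ) * (p.1 - p.2)) :=
      (hG.differentiableAt (isOpen_ball.mem_nhds (hsub hmem))).hasDerivAt
    have hA : HasFDerivAt (fun q : ℂ × ℂ => q.2 + (t:ℂ) * (q.1 - q.2)) (L t) p := by
      have : (fun q : ℂ × ℂ => q.2 + (t:ℂ) * (q.1 - q.2)) = fun q => L t q := by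
        funext q; rw [hL_apply]; push_cast; ring
      rw [this]
      exact (L t).hasFDerivAt
    have := (hGd.comp_hasFDerivAt p hA).const_mul ((φ t : ℝ) : ℂ)
    exact this
  -- continuity of integrand in t for fixed p in the ball
  have hinner_cont : ∀ p : ℂ × ℂ, Continuous (fun t : ℝ => p.2 + (t:ℂ) * (p.1 - p.2)) :=
    fun p => continuous_const.add (Complex.continuous_ofReal.mul continuous_const)
  have hcont : ∀ p ∈ ball p₀ ε, ContinuousOn
      (fun t : ℝ => (φ t : ℂ) * G (p.2 + (t:ℂ) * (p.1 - p.2))) (Icc 0 1) := by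
    intro p hp
    apply ContinuousOn.mul (Complex.continuous_ofReal.comp hφ).continuousOn
    exact (hGc.mono (subset_refl _)).comp ((hinner_cont p).continuousOn)
      (fun t ht => hsub (hseg p hp t ht))
  -- continuity of F' p₀ in t
  have hF'cont : ContinuousOn (fun t => F' p₀ t) (Icc 0 1) := by
    apply ContinuousOn.fun_smul
    · exact (Complex.continuous_ofReal.comp hφ).continuousOn
    apply ContinuousOn.fun_smul
    · exact (hG'c.mono (subset_refl _)).comp ((hinner_cont p₀).continuousOn)
        (fun t ht => hsub (hseg p₀ (mem_ball_self hε0) t ht))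
    · apply Continuous.continuousOn
      apply Continuous.add
      · exact (Complex.continuous_ofReal).fun_smul continuous_const
      · exact (Complex.continuous_ofReal.comp (continuous_const.sub continuous_id)).fun_smul
          continuous_const
  have hIoc_sub : Set.uIoc (0:ℝ) 1 ⊆ Icc 0 1 := by
    rw [uIoc_of_le (by norm_num : (0:ℝ) ≤ 1)]
    exact Ioc_subset_Icc_self
  -- apply the dominated parametric differentiation theorem
  have main := intervalIntegral.hasFDerivAt_integral_of_dominated_of_fderiv_le
    (μ := MeasureTheory.volume) (a := (0:ℝ)) (b := 1)
    (F := fun p t => (φ t : ℂ) * G (p.2 + (t:ℂ) * (p.1 - p.2)))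
    (F' := F') (x₀ := p₀) (bound := fun t => |φ t| * (C * 2)) (ball_mem_nhds p₀ hε0)
    ?_ ?_ ?_ ?_ ?_ ?_
  · exact main.differentiableAt
  · -- hF_meas
    filter_upwards [ball_mem_nhds p₀ hε0] with p hp
    exact ((hcont p hp).mono hIoc_sub).aestronglyMeasurable measurableSet_uIoc
  · -- hF_int
    exact ((hcont p₀ (mem_ball_self hε0)).mono (by
      rw [uIcc_of_le (by norm_num : (0:ℝ) ≤ 1)])).intervalIntegrable
  · -- hF'_meas
    exact (hF'cont.mono hIoc_sub).aestronglyMeasurable measurableSet_uIoc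
  · -- h_bound
    apply MeasureTheory.ae_of_all
    intro t ht p hp
    have ht' : t ∈ Icc (0:ℝ) 1 := hIoc_sub ht
    rw [hF']
    show ‖F' p t‖ ≤ |φ t| * (C * 2)
    apply ContinuousLinearMap.opNorm_le_bound _ (by positivity)
    intro x
    have happ : (F' p t) x
        = (φ t : ℂ) * (deriv G (p.2 + (t:ℂ) * (p.1 - p.2)) * (L t x)) := by
      simp [hF', mul_assoc]
    rw [happ]
    calc ‖(φ t : ℂ) * (deriv G (p.2 + (t:ℂ) * (p.1 - p.2)) * (L t x))‖
        = |φ t| * (‖deriv G (p.2 + (t:ℂ) * (p.1 - p.2))‖ * ‖L t x‖) := by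
          rw [norm_mul, norm_mul, Complex.norm_real, Real.norm_eq_abs]
      _ ≤ |φ t| * (C * (2 * ‖x‖)) := by
          apply mul_le_mul_of_nonneg_left _ (abs_nonneg _)
          apply mul_le_mul (hC _ (hseg p hp t ht')) _ (norm_nonneg _) hC0
          calc ‖L t x‖ ≤ ‖L t‖ * ‖x‖ := (L t).le_opNorm x
            _ ≤ 2 * ‖x‖ := mul_le_mul_of_nonneg_right (hLnorm t ht') (norm_nonneg _)
      _ = |φ t| * (C * 2) * ‖x‖ := by ring
  · -- bound integrable
    exact ((hφ.abs.mul continuous_const).continuousOn).intervalIntegrable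
  · -- h_diff
    apply MeasureTheory.ae_of_all
    intro t ht p hp
    exact hdiff t (hIoc_sub ht) p hp

section FTC

variable {f f1 f2 f3 : ℂ → ℂ} {u w : ℂ}

private lemma hasDerivAt_coe (t : ℝ) : HasDerivAt (fun s : ℝ => (s : ℂ)) 1 t := by
  simpa using (hasDerivAt_id t).ofReal_comp

private lemma hasDerivAt_gamma (u w : ℂ) (t : ℝ) :
    HasDerivAt (fun s : ℝ => w + (s:ℂ) * (u - w)) (u - w) t := by
  simpa using ((hasDerivAt_coe t).mul_const (u - w)).const_add w

-- FTC for g : ∫ f1 = (f u - f w)/(u - w)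
lemma ftc_g (hne : u ≠ w)
    (hd : ∀ t ∈ Icc (0:ℝ) 1, HasDerivAt f (f1 (w + (t:ℂ) * (u - w))) (w + (t:ℂ) * (u - w)))
    (hc : ContinuousOn (fun t : ℝ => f1 (w + (t:ℂ) * (u - w))) (Icc 0 1)) :
    ∫ t in (0:ℝ)..1, (((1:ℝ) : ℂ)) * f1 (w + (t:ℂ) * (u - w))
      = (f u - f w) / (u - w) := by
  have h0 : (u - w) ≠ 0 := sub_ne_zero.2 hne
  have huIcc : uIcc (0:ℝ) 1 = Icc 0 1 := uIcc_of_le zero_le_one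
  have key : ∀ t ∈ uIcc (0:ℝ) 1,
      HasDerivAt (fun s : ℝ => f (w + (s:ℂ) * (u - w)) / (u - w))
        ((((1:ℝ)):ℂ) * f1 (w + (t:ℂ) * (u - w))) t := by
    intro t ht
    rw [huIcc] at ht
    have h1 := HasDerivAt.scomp (𝕜 := ℝ) (𝕜' := ℂ) t (hd t ht) (hasDerivAt_gamma u w t)
    have h2 := h1.div_const (u - w)
    refine h2.congr_deriv ?_
    simp only [smul_eq_mul, Function.comp_apply, Complex.ofReal_one]
    field_simp
  have hint : IntervalIntegrable
      (fun t : ℝ => (((1:ℝ)):ℂ) * f1 (w + (t:ℂ) * (u - w))) volume 0 1 := by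
    apply ContinuousOn.intervalIntegrable
    rw [huIcc]
    exact (continuous_const.continuousOn).mul hc
  have := intervalIntegral.integral_eq_sub_of_hasDerivAt key hint
  rw [this]
  push_cast
  rw [show w + (1:ℂ) * (u - w) = u by ring, show w + (0:ℂ) * (u - w) = w by ring]
  ring

end FTC

section FTC2
variable {f f1 f2 f3 : ℂ → ℂ} {u w : ℂ}

lemma ftc_g1 (hne : u ≠ w)
    (hd : ∀ t ∈ Icc (0:ℝ) 1, HasDerivAt f (f1 (w + (t:ℂ) * (u - w))) (w + (t:ℂ) * (u - w)))
    (hd1 : ∀ t ∈ Icc (0:ℝ) 1, HasDerivAt f1 (f2 (w + (t:ℂ) * (u - w))) (w + (t:ℂ) * (u - w)))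
    (hc : ContinuousOn (fun t : ℝ => f2 (w + (t:ℂ) * (u - w))) (Icc 0 1)) :
    ∫ t in (0:ℝ)..1, ((t : ℝ) : ℂ) * f2 (w + (t:ℂ) * (u - w))
      = f1 u / (u - w) - (f u - f w) / (u - w)^2 := by
  have h0 : (u - w) ≠ 0 := sub_ne_zero.2 hne
  have huIcc : uIcc (0:ℝ) 1 = Icc 0 1 := uIcc_of_le zero_le_one
  have key : ∀ t ∈ uIcc (0:ℝ) 1,
      HasDerivAt (fun s : ℝ => (s:ℂ) * f1 (w + (s:ℂ) * (u - w)) / (u - w)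
          - f (w + (s:ℂ) * (u - w)) / (u - w)^2)
        (((t : ℝ) : ℂ) * f2 (w + (t:ℂ) * (u - w))) t := by
    intro t ht
    rw [huIcc] at ht
    have hγ := hasDerivAt_gamma u w t
    have c1 := HasDerivAt.scomp (𝕜 := ℝ) (𝕜' := ℂ) t (hd t ht) hγ
    have c2 := HasDerivAt.scomp (𝕜 := ℝ) (𝕜' := ℂ) t (hd1 t ht) hγ
    have h1 := (((hasDerivAt_coe t).mul c2).div_const (u - w)).sub (c1.div_const ((u - w)^2))
    refine h1.congr_deriv ?_
    simp only [smul_eq_mul, Function.comp_apply, Complex.ofReal_one]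
    field_simp
    ring
  have hint : IntervalIntegrable
      (fun t : ℝ => ((t : ℝ) : ℂ) * f2 (w + (t:ℂ) * (u - w))) volume 0 1 := by
    apply ContinuousOn.intervalIntegrable
    rw [huIcc]
    exact (Complex.continuous_ofReal.continuousOn).mul hc
  rw [intervalIntegral.integral_eq_sub_of_hasDerivAt key hint]
  push_cast
  rw [show w + (1:ℂ) * (u - w) = u by ring, show w + (0:ℂ) * (u - w) = w by ring]
  field_simp
  ring

lemma ftc_g2 (hne : u ≠ w)
    (hd : ∀ t ∈ Icc (0:ℝ) 1, HasDerivAt f (f1 (w + (t:ℂ) * (u - w))) (w + (t:ℂ) * (u - w)))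
    (hd1 : ∀ t ∈ Icc (0:ℝ) 1, HasDerivAt f1 (f2 (w + (t:ℂ) * (u - w))) (w + (t:ℂ) * (u - w)))
    (hc : ContinuousOn (fun t : ℝ => f2 (w + (t:ℂ) * (u - w))) (Icc 0 1)) :
    ∫ t in (0:ℝ)..1, ((1 - t : ℝ) : ℂ) * f2 (w + (t:ℂ) * (u - w))
      = - f1 w / (u - w) + (f u - f w) / (u - w)^2 := by
  have h0 : (u - w) ≠ 0 := sub_ne_zero.2 hne
  have huIcc : uIcc (0:ℝ) 1 = Icc 0 1 := uIcc_of_le zero_le_one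
  have key : ∀ t ∈ uIcc (0:ℝ) 1,
      HasDerivAt (fun s : ℝ => (1 - (s:ℂ)) * f1 (w + (s:ℂ) * (u - w)) / (u - w)
          + f (w + (s:ℂ) * (u - w)) / (u - w)^2)
        (((1 - t : ℝ) : ℂ) * f2 (w + (t:ℂ) * (u - w))) t := by
    intro t ht
    rw [huIcc] at ht
    have hγ := hasDerivAt_gamma u w t
    have c1 := HasDerivAt.scomp (𝕜 := ℝ) (𝕜' := ℂ) t (hd t ht) hγ
    have c2 := HasDerivAt.scomp (𝕜 := ℝ) (𝕜' := ℂ) t (hd1 t ht) hγ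
    have hpoly : HasDerivAt (fun s : ℝ => 1 - (s:ℂ)) (-1) t := by
      simpa using (hasDerivAt_coe t).const_sub 1
    have h1 := (((hpoly).mul c2).div_const (u - w)).add (c1.div_const ((u - w)^2))
    refine h1.congr_deriv ?_
    push_cast [smul_eq_mul, Function.comp_apply]
    field_simp
    ring
  have hint : IntervalIntegrable
      (fun t : ℝ => ((1 - t : ℝ) : ℂ) * f2 (w + (t:ℂ) * (u - w))) volume 0 1 := by
    apply ContinuousOn.intervalIntegrable
    rw [huIcc]
    exact ((Complex.continuous_ofReal.comp (continuous_const.sub continuous_id)).continuousOn).mul hc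
  rw [intervalIntegral.integral_eq_sub_of_hasDerivAt key hint]
  push_cast
  rw [show w + (1:ℂ) * (u - w) = u by ring, show w + (0:ℂ) * (u - w) = w by ring]
  field_simp
  ring

lemma ftc_g12 (hne : u ≠ w)
    (hd : ∀ t ∈ Icc (0:ℝ) 1, HasDerivAt f (f1 (w + (t:ℂ) * (u - w))) (w + (t:ℂ) * (u - w)))
    (hd1 : ∀ t ∈ Icc (0:ℝ) 1, HasDerivAt f1 (f2 (w + (t:ℂ) * (u - w))) (w + (t:ℂ) * (u - w)))
    (hd2 : ∀ t ∈ Icc (0:ℝ) 1, HasDerivAt f2 (f3 (w + (t:ℂ) * (u - w))) (w + (t:ℂ) * (u - w)))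
    (hc : ContinuousOn (fun t : ℝ => f3 (w + (t:ℂ) * (u - w))) (Icc 0 1)) :
    ∫ t in (0:ℝ)..1, ((t * (1 - t) : ℝ) : ℂ) * f3 (w + (t:ℂ) * (u - w))
      = (f1 u + f1 w) / (u - w)^2 - 2 * (f u - f w) / (u - w)^3 := by
  have h0 : (u - w) ≠ 0 := sub_ne_zero.2 hne
  have huIcc : uIcc (0:ℝ) 1 = Icc 0 1 := uIcc_of_le zero_le_one
  have key : ∀ t ∈ uIcc (0:ℝ) 1,
      HasDerivAt (fun s : ℝ => ((s:ℂ) - (s:ℂ)^2) * f2 (w + (s:ℂ) * (u - w)) / (u - w)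
          - (1 - 2*(s:ℂ)) * f1 (w + (s:ℂ) * (u - w)) / (u - w)^2
          - 2 * f (w + (s:ℂ) * (u - w)) / (u - w)^3)
        (((t * (1 - t) : ℝ) : ℂ) * f3 (w + (t:ℂ) * (u - w))) t := by
    intro t ht
    rw [huIcc] at ht
    have hγ := hasDerivAt_gamma u w t
    have c1 := HasDerivAt.scomp (𝕜 := ℝ) (𝕜' := ℂ) t (hd t ht) hγ
    have c2 := HasDerivAt.scomp (𝕜 := ℝ) (𝕜' := ℂ) t (hd1 t ht) hγ
    have c3 := HasDerivAt.scomp (𝕜 := ℝ) (𝕜' := ℂ) t (hd2 t ht) hγ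
    have hpow : HasDerivAt (fun s : ℝ => (s:ℂ)^2) (2*(t:ℂ)) t := by
      have h := (hasDerivAt_coe t).mul (hasDerivAt_coe t)
      have e : (fun s : ℝ => (s:ℂ)^2) = fun s : ℝ => (s:ℂ)*(s:ℂ) := by
        funext s; ring
      rw [e]
      exact h.congr_deriv (by ring)
    have hp1 : HasDerivAt (fun s : ℝ => (s:ℂ) - (s:ℂ)^2) (1 - 2*(t:ℂ)) t :=
      (hasDerivAt_coe t).sub hpow
    have hp2 : HasDerivAt (fun s : ℝ => 1 - 2*(s:ℂ)) (-2) t := by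
      simpa using ((hasDerivAt_coe t).const_mul (2:ℂ)).const_sub 1
    have h1 := (((hp1.mul c3).div_const (u - w)).sub
      ((hp2.mul c2).div_const ((u - w)^2))).sub
      ((c1.const_mul (2:ℂ)).div_const ((u - w)^3))
    refine h1.congr_deriv ?_
    push_cast [smul_eq_mul, Function.comp_apply]
    field_simp
    ring
  have hint : IntervalIntegrable
      (fun t : ℝ => ((t * (1 - t) : ℝ) : ℂ) * f3 (w + (t:ℂ) * (u - w))) volume 0 1 := by
    apply ContinuousOn.intervalIntegrable
    rw [huIcc]
    refine ContinuousOn.mul ?_ hc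
    exact (Complex.continuous_ofReal.comp
      (continuous_id.mul (continuous_const.sub continuous_id))).continuousOn
  rw [intervalIntegral.integral_eq_sub_of_hasDerivAt key hint]
  push_cast
  rw [show w + (1:ℂ) * (u - w) = u by ring, show w + (0:ℂ) * (u - w) = w by ring]
  field_simp
  ring

end FTC2

private lemma seg_mem_ball {a : ℂ} {r : ℝ} {p : ℂ × ℂ} (h1 : p.1 ∈ ball a r)
    (h2 : p.2 ∈ ball a r) {t : ℝ} (ht : t ∈ Icc (0:ℝ) 1) :
    p.2 + (t:ℂ) * (p.1 - p.2) ∈ ball a r := by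
  have := (convex_ball a r).add_smul_sub_mem h2 h1 ht
  simpa [Complex.real_smul] using this

private lemma intphi (φ : ℝ → ℝ) (c : ℂ) :
    ∫ t in (0:ℝ)..1, ((φ t : ℝ) : ℂ) * c
      = (((∫ t in (0:ℝ)..1, φ t) : ℝ) : ℂ) * c := by
  rw [intervalIntegral.integral_mul_const, intervalIntegral.integral_ofReal]

private lemma piecewise_diff {U : Set ℂ} (hU : IsOpen U) {G : ℂ → ℂ}
    (hG : DifferentiableOn ℂ G U) {φ : ℝ → ℝ} (hφ : Continuous φ) {g : ℂ × ℂ → ℂ}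
    (hoff : ∀ p : ℂ × ℂ, p.1 ∈ U → p.2 ∈ U → p.1 ≠ p.2 → DifferentiableAt ℂ g p)
    (hball : ∀ a ∈ U, ∀ r : ℝ, 0 < r → ball a r ⊆ U →
      ∀ p : ℂ × ℂ, p.1 ∈ ball a r → p.2 ∈ ball a r →
        g p = ∫ t in (0:ℝ)..1, ((φ t : ℝ) : ℂ) * G (p.2 + (t:ℂ) * (p.1 - p.2))) :
    DifferentiableOn ℂ g (U ×ˢ U) := by
  intro p₀ hp₀
  rw [Set.mem_prod] at hp₀
  apply DifferentiableAt.differentiableWithinAt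
  by_cases hne : p₀.1 = p₀.2
  · obtain ⟨r, hr0, hrsub⟩ := Metric.isOpen_iff.1 hU p₀.1 hp₀.1
    have hd : DifferentiableAt ℂ (fun p : ℂ × ℂ =>
        ∫ t in (0:ℝ)..1, ((φ t : ℝ) : ℂ) * G (p.2 + (t:ℂ) * (p.1 - p.2))) p₀ := by
      apply intdiff (hG.mono hrsub) φ hφ (mem_ball_self hr0)
      rw [← hne]; exact mem_ball_self hr0
    apply hd.congr_of_eventuallyEq
    have hmem2 : p₀.2 ∈ ball p₀.1 r := by rw [← hne]; exact mem_ball_self hr0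
    filter_upwards [(isOpen_ball.prod isOpen_ball).mem_nhds
      (Set.mem_prod.2 ⟨mem_ball_self hr0, hmem2⟩)] with p hp
    exact hball p₀.1 hp₀.1 r hr0 hrsub p hp.1 hp.2
  · exact hoff p₀ hp₀.1 hp₀.2 hne


private lemma grunsky_algebra (A B D h : ℂ) (hD : D ≠ 0) (hh : h ≠ 0) :
    ((D/h) * ((A+B)/h^2 - 2*D/h^3) - (A/h - D/h^2) * (-B/h + D/h^2)) / (D/h)^2
      = A*B/D^2 - 1/h^2 := by
  have key : ((D/h) * ((A+B)/h^2 - 2*D/h^3) - (A/h - D/h^2) * (-B/h + D/h^2))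
      = (A*B/D^2 - 1/h^2) * (D/h)^2 := by
    have e : h ^ 14 * h⁻¹ ^ 12 = h ^ 2 := by
      rw [show (14:ℕ) = 12 + 2 from rfl, pow_add, mul_comm (h^12) (h^2), mul_assoc,
        ← mul_pow, mul_inv_cancel₀ hh, one_pow, mul_one]
    have e2 : h ^ 12 * h⁻¹ ^ 12 = 1 := by
      rw [← mul_pow, mul_inv_cancel₀ hh, one_pow]
    field_simp
    ring
  rw [key, mul_div_cancel_right₀ _ (pow_ne_zero 2 (div_ne_zero hD hh))]

set_option maxHeartbeats 2000000 in
theorem grunsky_kernel_extends (U : Set ℂ) (hU : IsOpen U) (f : ℂ → ℂ)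
    (hf : DifferentiableOn ℂ f U) (hinj : Set.InjOn f U) :
    ∃ F : ℂ × ℂ → ℂ, DifferentiableOn ℂ F (U ×ˢ U) ∧
      ∀ u ∈ U, ∀ w ∈ U, u ≠ w →
        F (u, w) = deriv f u * deriv f w / (f u - f w) ^ 2 - 1 / (u - w) ^ 2 := by
  classical
  have hAn : AnalyticOnNhd ℂ f U := hf.analyticOnNhd hU
  set f1 : ℂ → ℂ := deriv f with hf1
  set f2 : ℂ → ℂ := deriv f1 with hf2
  set f3 : ℂ → ℂ := deriv f2 with hf3
  have hAn1 : AnalyticOnNhd ℂ f1 U := hAn.deriv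
  have hAn2 : AnalyticOnNhd ℂ f2 U := hAn1.deriv
  have hAn3 : AnalyticOnNhd ℂ f3 U := hAn2.deriv
  have hD1 : DifferentiableOn ℂ f1 U := hAn1.differentiableOn
  have hD2 : DifferentiableOn ℂ f2 U := hAn2.differentiableOn
  have hD3 : DifferentiableOn ℂ f3 U := hAn3.differentiableOn
  -- derivative facts at points of U
  have hdf : ∀ z ∈ U, HasDerivAt f (f1 z) z := fun z hz =>
    (hf.differentiableAt (hU.mem_nhds hz)).hasDerivAt
  have hdf1 : ∀ z ∈ U, HasDerivAt f1 (f2 z) z := fun z hz =>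
    (hD1.differentiableAt (hU.mem_nhds hz)).hasDerivAt
  have hdf2 : ∀ z ∈ U, HasDerivAt f2 (f3 z) z := fun z hz =>
    (hD2.differentiableAt (hU.mem_nhds hz)).hasDerivAt
  -- continuity along segments inside a ball contained in U
  have hγcont : ∀ p : ℂ × ℂ, Continuous (fun t : ℝ => p.2 + (t:ℂ) * (p.1 - p.2)) :=
    fun p => continuous_const.add (Complex.continuous_ofReal.mul continuous_const)
  have hsegcont : ∀ (G : ℂ → ℂ), DifferentiableOn ℂ G U → ∀ (a : ℂ) (r : ℝ),
      ball a r ⊆ U → ∀ p : ℂ × ℂ, p.1 ∈ ball a r → p.2 ∈ ball a r →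
      ContinuousOn (fun t : ℝ => G (p.2 + (t:ℂ) * (p.1 - p.2))) (Icc 0 1) := by
    intro G hG a r hrsub p hp1 hp2
    exact hG.continuousOn.comp ((hγcont p).continuousOn)
      (fun t ht => hrsub (seg_mem_ball hp1 hp2 ht))
  -- the four auxiliary functions
  set g : ℂ × ℂ → ℂ := fun p =>
    if p.1 = p.2 then f1 p.1 else (f p.1 - f p.2) / (p.1 - p.2) with hg
  set g1 : ℂ × ℂ → ℂ := fun p =>
    if p.1 = p.2 then f2 p.1 / 2
    else f1 p.1 / (p.1 - p.2) - (f p.1 - f p.2) / (p.1 - p.2)^2 with hg1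
  set g2 : ℂ × ℂ → ℂ := fun p =>
    if p.1 = p.2 then f2 p.1 / 2
    else - f1 p.2 / (p.1 - p.2) + (f p.1 - f p.2) / (p.1 - p.2)^2 with hg2
  set g12 : ℂ × ℂ → ℂ := fun p =>
    if p.1 = p.2 then f3 p.1 / 6
    else (f1 p.1 + f1 p.2) / (p.1 - p.2)^2 - 2 * (f p.1 - f p.2) / (p.1 - p.2)^3 with hg12
  -- component differentiability helpers (off the diagonal)
  have hcomp : ∀ (G : ℂ → ℂ), DifferentiableOn ℂ G U → ∀ p : ℂ × ℂ, p.1 ∈ U → p.2 ∈ U →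
      DifferentiableAt ℂ (fun q : ℂ × ℂ => G q.1) p ∧
      DifferentiableAt ℂ (fun q : ℂ × ℂ => G q.2) p := by
    intro G hG p h1 h2
    exact ⟨(hG.differentiableAt (hU.mem_nhds h1)).comp p differentiableAt_fst,
      (hG.differentiableAt (hU.mem_nhds h2)).comp p differentiableAt_snd⟩
  have hsubdiff : ∀ p : ℂ × ℂ, DifferentiableAt ℂ (fun q : ℂ × ℂ => q.1 - q.2) p :=
    fun p => differentiableAt_fst.sub differentiableAt_snd
  have hdivP : ∀ (c d : ℂ × ℂ → ℂ) (p : ℂ × ℂ), DifferentiableAt ℂ c p →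
      DifferentiableAt ℂ d p → d p ≠ 0 → DifferentiableAt ℂ (fun q => c q / d q) p := by
    intro c d p hc hd h0
    simpa [div_eq_mul_inv] using hc.fun_mul (hd.inv h0)
  have hnever : ∀ p : ℂ × ℂ, p.1 ≠ p.2 → ∀ᶠ q in 𝓝 p, q.1 ≠ q.2 := by
    intro p hp
    exact isClosed_diagonal.isOpen_compl.eventually_mem (by simpa [Set.mem_diagonal_iff] using hp)
  -- nonvanishing of g on U ×ˢ U
  have hgne : ∀ p : ℂ × ℂ, p.1 ∈ U → p.2 ∈ U → g p ≠ 0 := by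
    intro p h1 h2
    rw [hg]
    by_cases hpe : p.1 = p.2
    · simpa [hpe] using deriv_ne_zero_of_injOn hU hf hinj h2
    · simp only [if_neg hpe]
      apply div_ne_zero
      · exact sub_ne_zero.2 (fun hc => hpe (hinj h1 h2 hc))
      · exact sub_ne_zero.2 hpe
  -- differentiability of the four functions
  have hgdiff : DifferentiableOn ℂ g (U ×ˢ U) := by
    apply piecewise_diff hU hD1 continuous_const (φ := fun _ => (1:ℝ))
    · -- off-diagonal
      intro p h1 h2 hne
      have hnum : DifferentiableAt ℂ (fun q : ℂ × ℂ => f q.1 - f q.2) p :=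
        (hcomp f hf p h1 h2).1.sub (hcomp f hf p h1 h2).2
      have hform : DifferentiableAt ℂ
          (fun q : ℂ × ℂ => (f q.1 - f q.2) / (q.1 - q.2)) p :=
        hdivP _ _ p hnum (hsubdiff p) (sub_ne_zero.2 hne)
      apply hform.congr_of_eventuallyEq
      filter_upwards [hnever p hne] with q hq
      rw [hg]; simp only [if_neg hq]
    · -- agreement with the integral on balls
      intro a ha r hr0 hrsub p hp1 hp2
      by_cases hpe : p.1 = p.2
      · have hconst : ∀ t : ℝ, p.2 + (t:ℂ) * (p.1 - p.2) = p.2 := by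
          intro t; rw [hpe]; ring
        simp only [hconst]
        rw [intphi]
        rw [hg]
        simp [hpe]
      · rw [hg]
        simp only [if_neg hpe]
        rw [← ftc_g hpe (fun t ht => hdf _ (hrsub (seg_mem_ball hp1 hp2 ht)))
          (hsegcont f1 hD1 a r hrsub p hp1 hp2)]
  have hg1diff : DifferentiableOn ℂ g1 (U ×ˢ U) := by
    apply piecewise_diff hU hD2 continuous_id (φ := fun t => t)
    · intro p h1 h2 hne
      have hd0 : (p.1 - p.2) ≠ 0 := sub_ne_zero.2 hne
      have hnum : DifferentiableAt ℂ (fun q : ℂ × ℂ => f q.1 - f q.2) p :=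
        (hcomp f hf p h1 h2).1.sub (hcomp f hf p h1 h2).2
      have hA : DifferentiableAt ℂ (fun q : ℂ × ℂ => f1 q.1 / (q.1 - q.2)) p :=
        hdivP _ _ p (hcomp f1 hD1 p h1 h2).1 (hsubdiff p) hd0
      have hB : DifferentiableAt ℂ
          (fun q : ℂ × ℂ => (f q.1 - f q.2) / (q.1 - q.2)^2) p :=
        hdivP _ _ p hnum ((hsubdiff p).pow 2) (pow_ne_zero 2 hd0)
      apply (hA.fun_sub hB).congr_of_eventuallyEq
      filter_upwards [hnever p hne] with q hq
      rw [hg1]; simp only [if_neg hq]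
    · intro a ha r hr0 hrsub p hp1 hp2
      by_cases hpe : p.1 = p.2
      · have hconst : ∀ t : ℝ, p.2 + (t:ℂ) * (p.1 - p.2) = p.2 := by
          intro t; rw [hpe]; ring
        simp only [hconst]
        rw [intphi]
        rw [hg1]
        simp [hpe, integral_id]
        ring
      · rw [hg1]
        simp only [if_neg hpe]
        rw [← ftc_g1 hpe (fun t ht => hdf _ (hrsub (seg_mem_ball hp1 hp2 ht)))
          (fun t ht => hdf1 _ (hrsub (seg_mem_ball hp1 hp2 ht)))
          (hsegcont f2 hD2 a r hrsub p hp1 hp2)]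
  have hg2diff : DifferentiableOn ℂ g2 (U ×ˢ U) := by
    apply piecewise_diff hU hD2 (continuous_const.sub continuous_id) (φ := fun t => 1 - t)
    · intro p h1 h2 hne
      have hd0 : (p.1 - p.2) ≠ 0 := sub_ne_zero.2 hne
      have hnum : DifferentiableAt ℂ (fun q : ℂ × ℂ => f q.1 - f q.2) p :=
        (hcomp f hf p h1 h2).1.sub (hcomp f hf p h1 h2).2
      have hA : DifferentiableAt ℂ (fun q : ℂ × ℂ => - f1 q.2 / (q.1 - q.2)) p :=
        hdivP _ _ p ((hcomp f1 hD1 p h1 h2).2.neg) (hsubdiff p) hd0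
      have hB : DifferentiableAt ℂ
          (fun q : ℂ × ℂ => (f q.1 - f q.2) / (q.1 - q.2)^2) p :=
        hdivP _ _ p hnum ((hsubdiff p).pow 2) (pow_ne_zero 2 hd0)
      apply (hA.fun_add hB).congr_of_eventuallyEq
      filter_upwards [hnever p hne] with q hq
      rw [hg2]; simp only [if_neg hq]
    · intro a ha r hr0 hrsub p hp1 hp2
      by_cases hpe : p.1 = p.2
      · have hconst : ∀ t : ℝ, p.2 + (t:ℂ) * (p.1 - p.2) = p.2 := by
          intro t; rw [hpe]; ring
        simp only [hconst]
        rw [intphi]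
        rw [hg2]
        have hval : ∫ t in (0:ℝ)..1, (1 - t : ℝ) = 1/2 := by
          rw [integral_sub intervalIntegrable_const
            intervalIntegrable_id]
          simp [integral_id]
          norm_num
        rw [hval]
        simp [hpe]
        ring
      · rw [hg2]
        simp only [if_neg hpe]
        rw [← ftc_g2 hpe (fun t ht => hdf _ (hrsub (seg_mem_ball hp1 hp2 ht)))
          (fun t ht => hdf1 _ (hrsub (seg_mem_ball hp1 hp2 ht)))
          (hsegcont f2 hD2 a r hrsub p hp1 hp2)]
  have hg12diff : DifferentiableOn ℂ g12 (U ×ˢ U) := by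
    apply piecewise_diff hU hD3 (continuous_id.mul (continuous_const.sub continuous_id))
      (φ := fun t => t * (1 - t))
    · intro p h1 h2 hne
      have hd0 : (p.1 - p.2) ≠ 0 := sub_ne_zero.2 hne
      have hnum : DifferentiableAt ℂ (fun q : ℂ × ℂ => f q.1 - f q.2) p :=
        (hcomp f hf p h1 h2).1.sub (hcomp f hf p h1 h2).2
      have hnum1 : DifferentiableAt ℂ (fun q : ℂ × ℂ => f1 q.1 + f1 q.2) p :=
        (hcomp f1 hD1 p h1 h2).1.add (hcomp f1 hD1 p h1 h2).2
      have hA : DifferentiableAt ℂ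
          (fun q : ℂ × ℂ => (f1 q.1 + f1 q.2) / (q.1 - q.2)^2) p :=
        hdivP _ _ p hnum1 ((hsubdiff p).pow 2) (pow_ne_zero 2 hd0)
      have hB : DifferentiableAt ℂ
          (fun q : ℂ × ℂ => 2 * (f q.1 - f q.2) / (q.1 - q.2)^3) p :=
        hdivP _ _ p (hnum.const_mul 2) ((hsubdiff p).pow 3) (pow_ne_zero 3 hd0)
      apply (hA.fun_sub hB).congr_of_eventuallyEq
      filter_upwards [hnever p hne] with q hq
      rw [hg12]; simp only [if_neg hq]
    · intro a ha r hr0 hrsub p hp1 hp2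
      by_cases hpe : p.1 = p.2
      · have hconst : ∀ t : ℝ, p.2 + (t:ℂ) * (p.1 - p.2) = p.2 := by
          intro t; rw [hpe]; ring
        simp only [hconst]
        rw [intphi]
        rw [hg12]
        have hval : ∫ t in (0:ℝ)..1, (t * (1 - t) : ℝ) = 1/6 := by
          have : (fun t : ℝ => t * (1 - t)) = fun t : ℝ => t - t^2 := by
            funext t; ring
          rw [this, integral_sub intervalIntegrable_id
            ((continuous_pow 2).intervalIntegrable _ _)]
          simp [integral_id, integral_pow]
          norm_num
        rw [hval]
        simp [hpe]
        ring
      · rw [hg12]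
        simp only [if_neg hpe]
        rw [← ftc_g12 hpe (fun t ht => hdf _ (hrsub (seg_mem_ball hp1 hp2 ht)))
          (fun t ht => hdf1 _ (hrsub (seg_mem_ball hp1 hp2 ht)))
          (fun t ht => hdf2 _ (hrsub (seg_mem_ball hp1 hp2 ht)))
          (hsegcont f3 hD3 a r hrsub p hp1 hp2)]
  -- assemble F
  refine ⟨fun p => (g p * g12 p - g1 p * g2 p) / (g p)^2, ?_, ?_⟩
  · intro p hp
    have hopen : IsOpen (U ×ˢ U) := hU.prod hU
    have h0 := hgdiff.differentiableAt (hopen.mem_nhds hp)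
    have h1 := hg1diff.differentiableAt (hopen.mem_nhds hp)
    have h2 := hg2diff.differentiableAt (hopen.mem_nhds hp)
    have h12 := hg12diff.differentiableAt (hopen.mem_nhds hp)
    rw [Set.mem_prod] at hp
    exact (hdivP _ _ p ((h0.mul h12).sub (h1.mul h2)) (h0.pow 2)
      (pow_ne_zero 2 (hgne p hp.1 hp.2))).differentiableWithinAt
  · intro u hu w hw hne
    have hd0 : (u - w) ≠ 0 := sub_ne_zero.2 hne
    have hΔ : f u - f w ≠ 0 := sub_ne_zero.2 (fun hc => hne (hinj hu hw hc))
    have e0 : g (u, w) = (f u - f w) / (u - w) := by rw [hg]; simp [hne]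
    have e1 : g1 (u, w) = f1 u / (u - w) - (f u - f w) / (u - w)^2 := by
      rw [hg1]; simp [hne]
    have e2 : g2 (u, w) = - f1 w / (u - w) + (f u - f w) / (u - w)^2 := by
      rw [hg2]; simp [hne]
    have e12 : g12 (u, w) = (f1 u + f1 w) / (u - w)^2 - 2 * (f u - f w) / (u - w)^3 := by
      rw [hg12]; simp [hne]
    show (g (u, w) * g12 (u, w) - g1 (u, w) * g2 (u, w)) / (g (u, w))^2
        = f1 u * f1 w / (f u - f w) ^ 2 - 1 / (u - w) ^ 2
    rw [e0, e1, e2, e12]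
    exact grunsky_algebra _ _ _ _ hΔ hd0
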